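/- Let X and Y be topological spaces, (Z, γ, z*) a contractible space, (g_i)_{i∈I} a family of Baire-one maps g_i : Y → Z, and (φ_i)_{i∈I} a family of continuous functions φ_i : X → [0,1] such that the family of supports (supp φ_i)_{i∈I} is discrete in X. Then the mapping f : X × Y → Z defined by f(x,y) = γ(g_i(y), 1 − φ_i(x)) if x ∈ supp φ_i for some i ∈ I, and f(x,y) = z* otherwise, is Baire-one. -/

import Mathlib

open Set Function Filter Topology

universe u

/-- An *equiconnecting* map on `Z`: a map `λ : Z × Z × [0,1] → Z`, continuous on
`Z × Z × [0,1]`, with `λ(x,y,0) = x`, `λ(x,y,1) = y` and `λ(x,x,t) = x`. -/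
structure IsEquiconnecting {Z : Type*} [TopologicalSpace Z] (lam : Z → Z → ℝ → Z) : Prop where
  continuousOn : ContinuousOn (fun p : Z × Z × ℝ => lam p.1 p.2.1 p.2.2)
    (Set.univ ×ˢ Set.univ ×ˢ Set.Icc (0 : ℝ) 1)
  map_zero : ∀ x y : Z, lam x y 0 = x
  map_one : ∀ x y : Z, lam x y 1 = y
  map_diag : ∀ x : Z, ∀ t ∈ Set.Icc (0 : ℝ) 1, lam x x t = x

/-- `lambdaIter lam n` is the map `λ_{n+1} : Z^{n+1} × S_{n+1} → Z` from the paper,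
defined recursively. -/
noncomputable def lambdaIter {Z : Type*} (lam : Z → Z → ℝ → Z) :
    (n : ℕ) → (Fin (n + 1) → Z) → (Fin (n + 1) → ℝ) → Z
  | 0, x, _ => x 0
  | n + 1, x, a =>
      if 0 < a 0 + a 1 then
        lambdaIter lam n
          (Fin.cons (lam (x 0) (x 1) (a 1 / (a 0 + a 1))) fun i => x i.succ.succ)
          (Fin.cons (a 0 + a 1) fun i => a i.succ.succ)
      else
        lambdaIter lam n (fun i => x i.succ) fun i => a i.succ

/-- `lambdaIterSet lam A n` is the set `λ^n(A)`:  `λ^0(A) = A` and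
`λ^{n+1}(A) = λ(λ^n(A) × A × [0,1])`. -/
def lambdaIterSet {Z : Type*} (lam : Z → Z → ℝ → Z) (A : Set Z) : ℕ → Set Z
  | 0 => A
  | n + 1 => (fun p : Z × Z × ℝ => lam p.1 p.2.1 p.2.2) ''
      (lambdaIterSet lam A n ×ˢ A ×ˢ Set.Icc (0 : ℝ) 1)

/-- `λ^∞(A) = ⋃_{n ≥ 1} λ^n(A)`. -/
def lambdaInftySet {Z : Type*} (lam : Z → Z → ℝ → Z) (A : Set Z) : Set Z :=
  ⋃ n : ℕ, lambdaIterSet lam A (n + 1)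

/-- An equiconnected space `(Z, λ)` is locally convex if every point has arbitrarily small
neighborhoods `V` with `λ^∞(V)` inside a given neighborhood. -/
def IsLocallyConvexEquiconnected {Z : Type*} [TopologicalSpace Z] (lam : Z → Z → ℝ → Z) :
    Prop :=
  ∀ z : Z, ∀ U ∈ nhds z, ∃ V ∈ nhds z, lambdaInftySet lam V ⊆ U

/-- A map is Baire-one if it is the pointwise limit of a sequence of continuous maps. -/
def BaireOne {Y Z : Type*} [TopologicalSpace Y] [TopologicalSpace Z] (g : Y → Z) : Prop :=
  ∃ h : ℕ → Y → Z, (∀ n, Continuous (h n)) ∧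
    ∀ y, Filter.Tendsto (fun n => h n y) Filter.atTop (nhds (g y))

/-- A locally finite partition of unity on `X`: continuous `[0,1]`-valued functions whose
supports (closures of the sets where they are nonzero) form a locally finite family and whose
pointwise sum is `1`. -/
def IsLocFinPartitionOfUnity {I X : Type*} [TopologicalSpace X] (φ : I → X → ℝ) : Prop :=
  (∀ i, Continuous (φ i)) ∧ (∀ i x, φ i x ∈ Set.Icc (0 : ℝ) 1) ∧
    (LocallyFinite fun i => closure (Function.support (φ i))) ∧ ∀ x, ∑ᶠ i, φ i x = 1

/-- A strong PP-space: for every dense `D ⊆ X` there are a sequence of locally finite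
partitions of unity and families of points of `D` such that points attached to the supports
containing `x` converge to `x` uniformly in the index, in the sense of condition (3). -/
def IsStrongPPSpace (X : Type*) [TopologicalSpace X] : Prop :=
  ∀ D : Set X, Dense D →
    ∃ (I : ℕ → Type u) (φ : ∀ n, I n → X → ℝ) (p : ∀ n, I n → X),
      (∀ n, IsLocFinPartitionOfUnity (φ n)) ∧ (∀ n i, p n i ∈ D) ∧
      ∀ x : X, ∀ U ∈ nhds x, ∃ n₀ : ℕ, ∀ n ≥ n₀, ∀ i : I n,
        x ∈ closure (Function.support (φ n i)) → p n i ∈ U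

/-- A zero set: the preimage of `{0}` under a continuous function `X → [0,1]`. -/
def IsZeroSet {X : Type*} [TopologicalSpace X] (A : Set X) : Prop :=
  ∃ f : X → ℝ, Continuous f ∧ (∀ x, f x ∈ Set.Icc (0 : ℝ) 1) ∧ A = f ⁻¹' {0}

/-- A cozero set: the preimage of `(0,1]` under a continuous function `X → [0,1]`. -/
def IsCozeroSet {X : Type*} [TopologicalSpace X] (A : Set X) : Prop :=
  ∃ f : X → ℝ, Continuous f ∧ (∀ x, f x ∈ Set.Icc (0 : ℝ) 1) ∧ A = f ⁻¹' Set.Ioc (0 : ℝ) 1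

/-- A functionally ambiguous set: simultaneously a countable union of zero sets and a
countable intersection of cozero sets. -/
def IsFunctionallyAmbiguous {X : Type*} [TopologicalSpace X] (A : Set X) : Prop :=
  (∃ F : ℕ → Set X, (∀ n, IsZeroSet (F n)) ∧ A = ⋃ n, F n) ∧
    ∃ B : ℕ → Set X, (∀ n, IsCozeroSet (B n)) ∧ A = ⋂ n, B n

/-- A discrete family of sets: every point has a neighborhood meeting at most one member. -/
def IsDiscreteFamily {I X : Type*} [TopologicalSpace X] (A : I → Set X) : Prop :=
  ∀ x : X, ∃ U ∈ nhds x, {i : I | (U ∩ A i).Nonempty}.Subsingleton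

/-- Weakly collectionwise normal: every discrete family of zero sets can be separated by a
discrete family of cozero sets. -/
def WeaklyCollectionwiseNormal (X : Type*) [TopologicalSpace X] : Prop :=
  ∀ (S : Type u) (F : S → Set X), (∀ s, IsZeroSet (F s)) → IsDiscreteFamily F →
    ∃ U : S → Set X, (∀ s, IsCozeroSet (U s)) ∧ IsDiscreteFamily U ∧ ∀ s, F s ⊆ U s

/-- A contracting structure on `Z`: a continuous `γ : Z × [0,1] → Z` with `γ(z,0) = z` and
`γ(z,1) = z₀`. -/
structure IsContracting {Z : Type*} [TopologicalSpace Z] (γ : Z → ℝ → Z) (z₀ : Z) :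
    Prop where
  continuousOn : ContinuousOn (fun p : Z × ℝ => γ p.1 p.2) (Set.univ ×ˢ Set.Icc (0 : ℝ) 1)
  map_zero : ∀ z : Z, γ z 0 = z
  map_one : ∀ z : Z, γ z 1 = z₀

/-- Let `(Z, γ, z₀)` be a contractible space, `(g_i)` a family of Baire-one
maps `Y → Z` and `(φ_i)` a family of continuous `[0,1]`-valued functions on `X` whose
supports form a discrete family.  Then the map `f` with `f(x,y) = γ(g_i(y), 1 - φ_i(x))` if
`x ∈ supp φ_i` and `f(x,y) = z₀` otherwise, is Baire-one. -/
theorem baireOne_contractible_glue {X Y Z I : Type*} [TopologicalSpace X]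
    [TopologicalSpace Y] [TopologicalSpace Z]
    (γ : Z → ℝ → Z) (z₀ : Z) (hγ : IsContracting γ z₀)
    (g : I → Y → Z) (hg : ∀ i, BaireOne (g i))
    (φ : I → X → ℝ) (hφc : ∀ i, Continuous (φ i)) (hφ01 : ∀ i x, φ i x ∈ Set.Icc (0 : ℝ) 1)
    (hdisc : IsDiscreteFamily fun i => closure (Function.support (φ i)))
    (f : X × Y → Z)
    (hf₁ : ∀ (x : X) (y : Y) (i : I),
      x ∈ closure (Function.support (φ i)) → f (x, y) = γ (g i y) (1 - φ i x))
    (hf₂ : ∀ (x : X) (y : Y),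
      (∀ i : I, x ∉ closure (Function.support (φ i))) → f (x, y) = z₀) :
    BaireOne f := by
  classical
  choose H Hc Ht using hg
  refine ⟨fun n p =>
    if h : ∃ i, p.1 ∈ closure (Function.support (φ i)) then
      γ (H h.choose n p.2) (1 - φ h.choose p.1) else z₀, ?_, ?_⟩
  · intro n
    rw [continuous_iff_continuousAt]
    rintro ⟨x, y⟩
    obtain ⟨U, hU, hsub⟩ := hdisc x
    by_cases hj : ∃ j, (U ∩ closure (Function.support (φ j))).Nonempty
    · obtain ⟨j, hjne⟩ := hj
      have hcont : Continuous (fun p : X × Y => γ (H j n p.2) (1 - φ j p.1)) := by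
        refine hγ.continuousOn.comp_continuous
          (((Hc j n).comp continuous_snd).prodMk
            (continuous_const.sub ((hφc j).comp continuous_fst))) ?_
        intro p
        refine ⟨trivial, ?_⟩
        have h01 := hφ01 j p.1
        constructor <;> simp only [Set.mem_Icc] at h01 <;> simp <;> linarith [h01.1, h01.2]
      refine hcont.continuousAt.congr ?_
      have hmem : (U ×ˢ (Set.univ : Set Y)) ∈ nhds (x, y) := prod_mem_nhds hU univ_mem
      filter_upwards [hmem] with p hp
      by_cases hi : ∃ i, p.1 ∈ closure (Function.support (φ i))
      · have h1 : hi.choose = j := hsub ⟨p.1, hp.1, hi.choose_spec⟩ hjne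
        simp only [dif_pos hi, h1]
      · have hz : φ j p.1 = 0 := by
          by_contra h
          exact hi ⟨j, subset_closure h⟩
        simp only [dif_neg hi, hz, sub_zero, hγ.map_one]
    · push_neg at hj
      refine (continuousAt_const (y := z₀)).congr ?_
      have hmem : (U ×ˢ (Set.univ : Set Y)) ∈ nhds (x, y) := prod_mem_nhds hU univ_mem
      filter_upwards [hmem] with p hp
      have hi : ¬ ∃ i, p.1 ∈ closure (Function.support (φ i)) := by
        rintro ⟨i, hpi⟩
        exact Set.nonempty_iff_ne_empty.mp (⟨p.1, hp.1, hpi⟩ : (U ∩ closure (Function.support (φ i))).Nonempty) (hj i)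
      simp [dif_neg hi]
  · rintro ⟨x, y⟩
    by_cases hi : ∃ i, x ∈ closure (Function.support (φ i))
    · have hx := hi.choose_spec
      set i := hi.choose with hidef
      have hf : f (x, y) = γ (g i y) (1 - φ i x) := hf₁ x y i hx
      rw [hf]
      have h01 := hφ01 i x
      simp only [Set.mem_Icc] at h01
      have ht : (1 - φ i x) ∈ Set.Icc (0 : ℝ) 1 := ⟨by linarith [h01.2], by linarith [h01.1]⟩
      have hcw : ContinuousWithinAt (fun p : Z × ℝ => γ p.1 p.2)
          (Set.univ ×ˢ Set.Icc (0 : ℝ) 1) (g i y, 1 - φ i x) :=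
        hγ.continuousOn _ ⟨trivial, ht⟩
      have htend : Tendsto (fun n => (H i n y, 1 - φ i x)) atTop
          (nhdsWithin (g i y, 1 - φ i x) (Set.univ ×ˢ Set.Icc (0 : ℝ) 1)) := by
        rw [tendsto_nhdsWithin_iff]
        exact ⟨(Ht i y).prodMk_nhds tendsto_const_nhds,
          Filter.Eventually.of_forall fun n => ⟨trivial, ht⟩⟩
      have := hcw.tendsto.comp htend
      simpa only [dif_pos hi, Function.comp_def] using this
    · have hf : f (x, y) = z₀ := hf₂ x y (by push_neg at hi; exact hi)
      rw [hf]
      simp only [dif_neg hi]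
      exact tendsto_const_nhds
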